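/- Let L, U, α, ρ, C be real numbers with 0 < L < U, α > 0, and ρ·C ≥ U − L. Define B(x) = (U/L)^{x−1}·((U − L − ρ·C)/(U − L)) + ρ·C/(U − L) and h(x) = 1 + B(x)^{−1/α} for real x. Let b be a real number with B(b) > 0 (then B(x) ≥ B(b) > 0 for all x ≤ b, since B is non-increasing). Then h is convex on the interval (−∞, b]. -/

import Mathlib

open Set Real

/-- For a negative exponent `p`, `t ↦ t ^ p` is convex on `(0, ∞)`. -/
lemma convexOn_rpow_neg {p : ℝ} (hp : p < 0) :
    ConvexOn ℝ (Set.Ioi (0 : ℝ)) (fun t : ℝ => t ^ p) := by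
  have hio : interior (Set.Ioi (0 : ℝ)) = Set.Ioi 0 := interior_Ioi
  refine convexOn_of_hasDerivWithinAt2_nonneg (convex_Ioi 0)
    (f' := fun t => p * t ^ (p - 1)) (f'' := fun t => p * ((p - 1) * t ^ (p - 2))) ?_ ?_ ?_ ?_
  · intro x hx
    exact (Real.continuousAt_rpow_const x p (Or.inl (ne_of_gt hx))).continuousWithinAt
  · intro x hx
    rw [hio] at hx ⊢
    exact (Real.hasDerivAt_rpow_const (Or.inl (ne_of_gt hx))).hasDerivWithinAt
  · intro x hx
    rw [hio] at hx ⊢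
    have h : HasDerivWithinAt (fun t : ℝ => p * t ^ (p - 1))
        (p * ((p - 1) * x ^ (p - 1 - 1))) (Set.Ioi 0) x :=
      ((Real.hasDerivAt_rpow_const (p := p - 1)
        (Or.inl (ne_of_gt hx))).const_mul p).hasDerivWithinAt
    convert h using 1
    ring_nf
  · intro x hx
    rw [hio] at hx
    have h1 : (0:ℝ) ≤ p * (p - 1) := by nlinarith
    have h2 : (0:ℝ) ≤ x ^ (p - 2) := Real.rpow_nonneg (le_of_lt hx) _
    calc (0:ℝ) ≤ p * (p-1) * x ^ (p-2) := mul_nonneg h1 h2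
      _ = p * ((p - 1) * x ^ (p - 2)) := by ring

/-- Composition of a convex antitone function with a concave function is convex. -/
lemma convexOn_comp_concaveOn {s t : Set ℝ} {g f : ℝ → ℝ}
    (hg : ConvexOn ℝ t g) (hf : ConcaveOn ℝ s f) (hg' : AntitoneOn g t)
    (hmap : Set.MapsTo f s t) : ConvexOn ℝ s (fun x => g (f x)) := by
  refine ⟨hf.1, fun x hx y hy a b ha hb hab => ?_⟩
  have hfx := hmap hx
  have hfy := hmap hy
  have h1 : a • f x + b • f y ∈ t := hg.1 hfx hfy ha hb hab
  have h2 : f (a • x + b • y) ∈ t := hmap (hf.1 hx hy ha hb hab)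
  calc g (f (a • x + b • y)) ≤ g (a • f x + b • f y) :=
        hg' h1 h2 (hf.2 hx hy ha hb hab)
    _ ≤ a • g (f x) + b • g (f y) := hg.2 hfx hfy ha hb hab

/-- Convexity of the continuous interpolation
`h(x) = 1 + B(x)^{−1/α}` with `B(x) = (U/L)^{x−1}·((U−L−ρ·C)/(U−L)) + ρ·C/(U−L)`
on `(−∞, b]`, where `B b > 0`. -/
theorem interpolation_convex (L U α ρ C : ℝ)
    (hL : 0 < L) (hLU : L < U) (hα : 0 < α) (hc : U - L ≤ ρ * C)
    (b : ℝ)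
    (hb : 0 < (U / L) ^ (b - 1) * ((U - L - ρ * C) / (U - L)) + ρ * C / (U - L)) :
    ConvexOn ℝ (Set.Iic b)
      (fun x : ℝ =>
        1 + ((U / L) ^ (x - 1) * ((U - L - ρ * C) / (U - L)) + ρ * C / (U - L)) ^ (-1 / α)) := by
  set q : ℝ := U / L with hq
  set A : ℝ := (U - L - ρ * C) / (U - L) with hA
  set K : ℝ := ρ * C / (U - L) with hK
  have hq1 : 1 < q := (one_lt_div hL).mpr hLU
  have hq0 : 0 < q := lt_trans one_pos hq1
  have hUL : 0 < U - L := by linarith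
  have hA0 : A ≤ 0 := div_nonpos_of_nonpos_of_nonneg (by linarith) hUL.le
  set B : ℝ → ℝ := fun x => q ^ (x - 1) * A + K with hB
  -- B is concave on Iic b
  have hBconc : ConcaveOn ℝ (Set.Iic b) B := by
    have hexp : ConvexOn ℝ (Set.Iic b) (fun x : ℝ => q ^ (x - 1)) := by
      have h1 : ConvexOn ℝ (Set.Iic b) (fun x : ℝ => Real.exp ((x - 1) * Real.log q)) := by
        have := convexOn_exp.comp_affineMap
          (AffineMap.mk (fun x : ℝ => (x - 1) * Real.log q)
            (LinearMap.mk (AddHom.mk (fun x : ℝ => x * Real.log q) (by intro x y; ring))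
              (by intro m x; simp; ring)) (by intro p v; simp; ring))
        exact this.subset (Set.subset_univ _) (convex_Iic b)
      refine h1.congr fun x _ => ?_
      rw [Real.rpow_def_of_pos hq0, mul_comm]
    have hneg : ConcaveOn ℝ (Set.Iic b) (fun x : ℝ => q ^ (x - 1) * A) := by
      have h2 : ConvexOn ℝ (Set.Iic b) (fun x : ℝ => (-A) • (q ^ (x - 1))) :=
        hexp.smul (by linarith)
      have h3 := h2.neg
      refine h3.congr fun x _ => ?_
      simp [smul_eq_mul]; ring
    exact hneg.add_const K
  -- B x ≥ B b for x ≤ b, so B maps Iic b into Ici (B b)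
  have hmap : Set.MapsTo B (Set.Iic b) (Set.Ici (B b)) := by
    intro x hx
    simp only [Set.mem_Iic] at hx
    simp only [Set.mem_Ici, hB]
    have hqx : q ^ (x - 1) ≤ q ^ (b - 1) :=
      Real.rpow_le_rpow_of_exponent_le hq1.le (by linarith)
    nlinarith
  have hBb : 0 < B b := hb
  -- outer function t ↦ t ^ (-1/α) is convex and antitone on Ici (B b)
  have hp : -1 / α < 0 := div_neg_of_neg_of_pos (by norm_num) hα
  have hsub : Set.Ici (B b) ⊆ Set.Ioi (0 : ℝ) := fun t ht => lt_of_lt_of_le hBb ht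
  have hconv : ConvexOn ℝ (Set.Ici (B b)) (fun t : ℝ => t ^ (-1 / α)) :=
    (convexOn_rpow_neg hp).subset hsub (convex_Ici _)
  have hanti : AntitoneOn (fun t : ℝ => t ^ (-1 / α)) (Set.Ici (B b)) := by
    intro s hs t ht hst
    exact Real.rpow_le_rpow_of_nonpos (lt_of_lt_of_le hBb hs) hst hp.le
  have hcomp : ConvexOn ℝ (Set.Iic b) (fun x => (B x) ^ (-1 / α)) :=
    convexOn_comp_concaveOn hconv hBconc hanti hmap
  have := hcomp.add_const 1
  refine this.congr fun x _ => ?_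
  simp [hB]
  ring
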